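/- Let (L, γ, α) be a Hom-Lie coalgebra and (M, β) an L-comodule with structure map Γ: M → L⊗M. Then Γ̃ = (α²⊗Id_M)∘Γ is the structure map of another L-comodule structure on (M, β). -/
import Mathlib


open TensorProduct

/-- Flip on a tensor product. -/
noncomputable def tauT (K A B : Type*) [Field K] [AddCommGroup A] [Module K A]
    [AddCommGroup B] [Module K B] : A ⊗[K] B →ₗ[K] B ⊗[K] A :=
  (TensorProduct.comm K A B).toLinearMap

/-- Cyclic permutation x₁⊗x₂⊗x₃ ↦ x₃⊗x₁⊗x₂ on A⊗(A⊗A). -/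
noncomputable def cyc (K A : Type*) [Field K] [AddCommGroup A] [Module K A] :
    A ⊗[K] (A ⊗[K] A) →ₗ[K] A ⊗[K] (A ⊗[K] A) :=
  (TensorProduct.comm K (A ⊗[K] A) A).toLinearMap ∘ₗ
    (TensorProduct.assoc K A A A).symm.toLinearMap

/-- τ⊗Id acting on the first two factors of A⊗(A⊗M). -/
noncomputable def swap12 (K A M : Type*) [Field K] [AddCommGroup A] [Module K A]
    [AddCommGroup M] [Module K M] : A ⊗[K] (A ⊗[K] M) →ₗ[K] A ⊗[K] (A ⊗[K] M) :=
  (TensorProduct.assoc K A A M).toLinearMap ∘ₗ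
    TensorProduct.map (tauT K A A) LinearMap.id ∘ₗ
      (TensorProduct.assoc K A A M).symm.toLinearMap

/-- Comodule over a Hom-coassociative coalgebra (C, δ, α). -/
def IsHomComodule (K C M : Type*) [Field K] [AddCommGroup C] [Module K C]
    [AddCommGroup M] [Module K M] (δ : C →ₗ[K] C ⊗[K] C) (α : C →ₗ[K] C)
    (Δ : M →ₗ[K] C ⊗[K] M) (β : M →ₗ[K] M) : Prop :=
  Δ ∘ₗ β = TensorProduct.map α β ∘ₗ Δ ∧
  TensorProduct.map α Δ ∘ₗ Δ =
    (TensorProduct.assoc K C C M).toLinearMap ∘ₗ TensorProduct.map δ β ∘ₗ Δ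

/-- Comodule over a Hom-Lie coalgebra (L, γ, α). -/
def IsHomLieComodule (K L M : Type*) [Field K] [AddCommGroup L] [Module K L]
    [AddCommGroup M] [Module K M] (γ : L →ₗ[K] L ⊗[K] L) (α : L →ₗ[K] L)
    (Γ : M →ₗ[K] L ⊗[K] M) (β : M →ₗ[K] M) : Prop :=
  Γ ∘ₗ β = TensorProduct.map α β ∘ₗ Γ ∧
  (TensorProduct.assoc K L L M).toLinearMap ∘ₗ TensorProduct.map γ β ∘ₗ Γ =
    TensorProduct.map α Γ ∘ₗ Γ - swap12 K L M ∘ₗ TensorProduct.map α Γ ∘ₗ Γ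

/-- Hom-Poisson comodule over (A, δ, γ, α). -/
def IsHomPoissonComodule (K A M : Type*) [Field K] [AddCommGroup A] [Module K A]
    [AddCommGroup M] [Module K M] (δ γ : A →ₗ[K] A ⊗[K] A) (α : A →ₗ[K] A)
    (Δ Γ : M →ₗ[K] A ⊗[K] M) (β : M →ₗ[K] M) : Prop :=
  IsHomComodule K A M δ α Δ β ∧
  IsHomLieComodule K A M γ α Γ β ∧
  TensorProduct.map α Δ ∘ₗ Γ =
    (TensorProduct.assoc K A A M).toLinearMap ∘ₗ TensorProduct.map γ β ∘ₗ Δ +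
      swap12 K A M ∘ₗ TensorProduct.map α Γ ∘ₗ Δ ∧
  (TensorProduct.assoc K A A M).toLinearMap ∘ₗ TensorProduct.map δ β ∘ₗ Γ =
    TensorProduct.map α Γ ∘ₗ Δ + swap12 K A M ∘ₗ TensorProduct.map α Γ ∘ₗ Δ

/-- Cocommutative Hom-Poisson coalgebra. -/
def IsCocommHomPoissonCoalgebra (K A : Type*) [Field K] [AddCommGroup A] [Module K A]
    (δ γ : A →ₗ[K] A ⊗[K] A) (α : A →ₗ[K] A) : Prop :=
  δ = tauT K A A ∘ₗ δ ∧
  δ ∘ₗ α = TensorProduct.map α α ∘ₗ δ ∧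
  TensorProduct.map α δ ∘ₗ δ =
    (TensorProduct.assoc K A A A).toLinearMap ∘ₗ TensorProduct.map δ α ∘ₗ δ ∧
  γ = -(tauT K A A ∘ₗ γ) ∧
  γ ∘ₗ α = TensorProduct.map α α ∘ₗ γ ∧
  (LinearMap.id + cyc K A + cyc K A ∘ₗ cyc K A) ∘ₗ TensorProduct.map α γ ∘ₗ γ = 0 ∧
  TensorProduct.map α δ ∘ₗ γ =
    (TensorProduct.assoc K A A A).toLinearMap ∘ₗ TensorProduct.map γ α ∘ₗ δ +
      swap12 K A A ∘ₗ TensorProduct.map α γ ∘ₗ δ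

open TensorProduct in
private lemma assoc_nat {K A M : Type*} [Field K] [AddCommGroup A] [Module K A]
    [AddCommGroup M] [Module K M] (f g : A →ₗ[K] A) :
    (TensorProduct.assoc K A A M).toLinearMap ∘ₗ
        TensorProduct.map (TensorProduct.map f g) (LinearMap.id (M := M)) =
      TensorProduct.map f (TensorProduct.map g LinearMap.id) ∘ₗ
        (TensorProduct.assoc K A A M).toLinearMap := by
  apply TensorProduct.ext_threefold
  intro x y z
  simp

open TensorProduct in
private lemma swap12_nat {K A M : Type*} [Field K] [AddCommGroup A] [Module K A]
    [AddCommGroup M] [Module K M] (f : A →ₗ[K] A) :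
    swap12 K A M ∘ₗ TensorProduct.map f (TensorProduct.map f (LinearMap.id (M := M))) =
      TensorProduct.map f (TensorProduct.map f LinearMap.id) ∘ₗ swap12 K A M := by
  apply LinearMap.ext
  intro t
  induction t using TensorProduct.induction_on with
  | zero => simp
  | add a b ha hb => simp [map_add, ha, hb]
  | tmul x y =>
    induction y using TensorProduct.induction_on with
    | zero => simp
    | add a b ha hb => simp only [tmul_add, map_add] at *; rw [ha, hb]
    | tmul u m => simp [swap12, tauT]

theorem stmt17 {K L M : Type*} [Field K] [CharZero K] [AddCommGroup L] [Module K L]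
    [AddCommGroup M] [Module K M]
    (γ : L →ₗ[K] L ⊗[K] L) (α : L →ₗ[K] L)
    (hlie : γ = -(tauT K L L ∘ₗ γ) ∧
      γ ∘ₗ α = TensorProduct.map α α ∘ₗ γ ∧
      (LinearMap.id + cyc K L + cyc K L ∘ₗ cyc K L) ∘ₗ TensorProduct.map α γ ∘ₗ γ = 0)
    (Γ : M →ₗ[K] L ⊗[K] M) (β : M →ₗ[K] M)
    (hcom : IsHomLieComodule K L M γ α Γ β) :
    IsHomLieComodule K L M γ α (TensorProduct.map (α ∘ₗ α) LinearMap.id ∘ₗ Γ) β := by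
  obtain ⟨h1, h2⟩ := hcom
  obtain ⟨_, hga, _⟩ := hlie
  set a2 : L →ₗ[K] L := α ∘ₗ α with ha2
  constructor
  · -- first axiom
    calc (TensorProduct.map a2 LinearMap.id ∘ₗ Γ) ∘ₗ β
        = TensorProduct.map a2 LinearMap.id ∘ₗ (Γ ∘ₗ β) := by rw [LinearMap.comp_assoc]
      _ = TensorProduct.map a2 LinearMap.id ∘ₗ TensorProduct.map α β ∘ₗ Γ := by rw [h1]
      _ = TensorProduct.map (a2 ∘ₗ α) (LinearMap.id ∘ₗ β) ∘ₗ Γ := by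
            rw [← LinearMap.comp_assoc, ← TensorProduct.map_comp]
      _ = TensorProduct.map (α ∘ₗ a2) (β ∘ₗ LinearMap.id) ∘ₗ Γ := by
            rw [ha2, LinearMap.comp_assoc]
            simp
      _ = TensorProduct.map α β ∘ₗ TensorProduct.map a2 LinearMap.id ∘ₗ Γ := by
            rw [TensorProduct.map_comp, LinearMap.comp_assoc]
  · -- second axiom
    have hga2 : γ ∘ₗ a2 = TensorProduct.map a2 a2 ∘ₗ γ := by
      rw [ha2, ← LinearMap.comp_assoc, hga, LinearMap.comp_assoc, hga,
        ← LinearMap.comp_assoc, ← TensorProduct.map_comp]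
    set X : M →ₗ[K] L ⊗[K] (L ⊗[K] M) := TensorProduct.map α Γ ∘ₗ Γ with hX
    set F : L ⊗[K] (L ⊗[K] M) →ₗ[K] L ⊗[K] (L ⊗[K] M) :=
      TensorProduct.map a2 (TensorProduct.map a2 LinearMap.id) with hF
    -- LHS = F ∘ (assoc ∘ map γ β ∘ Γ)
    have hL : (TensorProduct.assoc K L L M).toLinearMap ∘ₗ
        TensorProduct.map γ β ∘ₗ (TensorProduct.map a2 LinearMap.id ∘ₗ Γ) =
        F ∘ₗ ((TensorProduct.assoc K L L M).toLinearMap ∘ₗ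
          TensorProduct.map γ β ∘ₗ Γ) := by
      have : TensorProduct.map γ β ∘ₗ TensorProduct.map a2 LinearMap.id =
          TensorProduct.map (TensorProduct.map a2 a2) LinearMap.id ∘ₗ
            TensorProduct.map γ β := by
        rw [← TensorProduct.map_comp, ← TensorProduct.map_comp, hga2]
        simp
      rw [← LinearMap.comp_assoc Γ, this]
      simp only [← LinearMap.comp_assoc]
      rw [assoc_nat, hF]
    -- RHS pieces: map α Γ' ∘ Γ' = F ∘ X
    have hR : TensorProduct.map α (TensorProduct.map a2 LinearMap.id ∘ₗ Γ) ∘ₗ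
        (TensorProduct.map a2 LinearMap.id ∘ₗ Γ) = F ∘ₗ X := by
      have e1 : TensorProduct.map α (TensorProduct.map a2 LinearMap.id ∘ₗ Γ) =
          TensorProduct.map LinearMap.id (TensorProduct.map a2 LinearMap.id) ∘ₗ
            TensorProduct.map α Γ := by
        rw [← TensorProduct.map_comp]; simp
      have e2 : TensorProduct.map α Γ ∘ₗ TensorProduct.map a2 LinearMap.id =
          TensorProduct.map a2 LinearMap.id ∘ₗ TensorProduct.map α Γ := by
        rw [← TensorProduct.map_comp, ← TensorProduct.map_comp, ha2]
        simp [LinearMap.comp_assoc]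
      rw [e1, LinearMap.comp_assoc, ← LinearMap.comp_assoc _ _ (TensorProduct.map α Γ),
        e2, hF, hX]
      simp only [← LinearMap.comp_assoc]
      rw [← TensorProduct.map_comp]
      simp only [LinearMap.id_comp, LinearMap.comp_id]
    rw [hL, hR, h2]
    have hS : swap12 K L M ∘ₗ F = F ∘ₗ swap12 K L M := by rw [hF, swap12_nat]
    rw [LinearMap.comp_sub]
    congr 1
    rw [← LinearMap.comp_assoc, ← hS, LinearMap.comp_assoc]
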